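/- Suppose M(n) is positive semidefinite, recursively generated, satisfies YX = 1, and in the column list 1, X, Y, X², Y², …, Xⁿ, Yⁿ the set {1, X, Y, …, X^{k−1}, Y^{k−1}} is linearly independent while X^k = p_{k−1}(X) + q_{k−1}(Y) for polynomials p_{k−1}, q_{k−1} of degree ≤ k−1 (with 2 ≤ k ≤ n). If moreover rank M(n) ≤ card V(M(n)), then {1, X, Y, …, X^{k−1}, Y^{k−1}} is a basis of the column space of M(n), i.e., M(n) is flat: rank M(n) = 2k−1. -/

import Mathlib

open MeasureTheory Matrix

/-- Index set for the moment matrix `M(n)`: monomials `yⁱxʲ` with `i + j ≤ n`,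
encoded as pairs `(i, j)`. -/
abbrev MIdx (n : ℕ) := {v : Fin (n + 1) × Fin (n + 1) // (v.1 : ℕ) + (v.2 : ℕ) ≤ n}

/-- The moment matrix `M(n)(β)`: entry in row `yⁱxʲ`, column `yᵏxˡ` is `β_{i+k, j+l}`. -/
def momentMat (n : ℕ) (β : ℕ → ℕ → ℝ) : Matrix (MIdx n) (MIdx n) ℝ :=
  Matrix.of fun u v => β ((u.1.1 : ℕ) + (v.1.1 : ℕ)) ((u.1.2 : ℕ) + (v.1.2 : ℕ))

/-- The coefficient vector `p̂` of a two-variable polynomial (convention: `X 0 = x`,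
`X 1 = y`; the coordinate of `p̂` at `(i, j)` is the coefficient of `yⁱxʲ`). -/
noncomputable def coeffVec (n : ℕ) (p : MvPolynomial (Fin 2) ℝ) : MIdx n → ℝ :=
  fun v => MvPolynomial.coeff
    (Finsupp.single (0 : Fin 2) ((v.1.2 : ℕ)) + Finsupp.single (1 : Fin 2) ((v.1.1 : ℕ))) p

/-- `M(n)` is recursively generated: if `p, q, pq` have degree at most `n` and
`p(X,Y) = 0` in the column space, then `(pq)(X,Y) = 0`. -/
def RecursivelyGenerated (n : ℕ) (M : Matrix (MIdx n) (MIdx n) ℝ) : Prop :=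
  ∀ p q : MvPolynomial (Fin 2) ℝ, p.totalDegree ≤ n → q.totalDegree ≤ n →
    (p * q).totalDegree ≤ n → M.mulVec (coeffVec n p) = 0 →
      M.mulVec (coeffVec n (p * q)) = 0

/-- The variety `V(M(n))`: common zero set of all polynomials of degree ≤ n whose
coefficient vector is annihilated by `M(n)`. -/
def varietyOf (n : ℕ) (M : Matrix (MIdx n) (MIdx n) ℝ) : Set (ℝ × ℝ) :=
  {w | ∀ p : MvPolynomial (Fin 2) ℝ, p.totalDegree ≤ n →
    M.mulVec (coeffVec n p) = 0 → MvPolynomial.eval ![w.1, w.2] p = 0}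

/-- The Riesz functional `L_β` of a truncated moment sequence. -/
def riesz (β : ℕ → ℕ → ℝ) (p : MvPolynomial (Fin 2) ℝ) : ℝ :=
  ∑ v ∈ p.support, p.coeff v * β (v 1) (v 0)

/-- The (closed) support of a Borel measure on `ℝ²`: points all of whose open
neighborhoods have positive measure. -/
def msupport (μ : Measure (ℝ × ℝ)) : Set (ℝ × ℝ) :=
  {w | ∀ U : Set (ℝ × ℝ), IsOpen U → w ∈ U → μ U ≠ 0}

/-- `μ` is a representing measure for `β^{(2n)}`. -/
def IsRepMeasure (n : ℕ) (β : ℕ → ℕ → ℝ) (μ : Measure (ℝ × ℝ)) : Prop :=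
  ∀ i j : ℕ, i + j ≤ 2 * n →
    Integrable (fun w : ℝ × ℝ => w.2 ^ i * w.1 ^ j) μ ∧
      β i j = ∫ w : ℝ × ℝ, w.2 ^ i * w.1 ^ j ∂μ



section AuxFlat

lemma aux_td_aeval (i : Fin 2) (p : Polynomial ℝ) :
    (Polynomial.aeval (MvPolynomial.X i : MvPolynomial (Fin 2) ℝ) p).totalDegree
      ≤ p.natDegree := by
  rw [Polynomial.aeval_eq_sum_range]
  refine (MvPolynomial.totalDegree_finset_sum _ _).trans (Finset.sup_le fun b hb => ?_)
  refine (MvPolynomial.totalDegree_smul_le _ _).trans ?_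
  rw [MvPolynomial.totalDegree_X_pow]
  exact Nat.lt_succ_iff.mp (Finset.mem_range.mp hb)

lemma aux_eval_aeval (x y : ℝ) (i : Fin 2) (p : Polynomial ℝ) :
    MvPolynomial.eval ![x, y] (Polynomial.aeval (MvPolynomial.X i) p)
      = Polynomial.eval (![x, y] i) p := by
  have h := Polynomial.aeval_algHom_apply
    (MvPolynomial.aeval (R := ℝ) ![x, y]) (MvPolynomial.X i) p
  simp only [MvPolynomial.aeval_X] at h
  rw [show (MvPolynomial.eval ![x, y]) (Polynomial.aeval (MvPolynomial.X i) p)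
    = (MvPolynomial.aeval ![x, y]) (Polynomial.aeval (MvPolynomial.X i) p) from rfl, ← h,
    Polynomial.aeval_def, Polynomial.eval₂_eq_eval_map]
  simp [Algebra.algebraMap_self]

lemma aux_reflect_eval (N : ℕ) (q : Polynomial ℝ) (hq : q.natDegree ≤ N) (x : ℝ) (hx : x ≠ 0) :
    (q.reflect N).eval x = q.eval x⁻¹ * x ^ N := by
  have : Invertible (x⁻¹) := invertibleOfNonzero (inv_ne_zero hx)
  have h := Polynomial.eval₂_reflect_mul_pow (RingHom.id ℝ) (x⁻¹) N q hq
  rw [invOf_eq_inv, inv_inv] at h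
  have e1 : ∀ (a : ℝ) (f : Polynomial ℝ), Polynomial.eval₂ (RingHom.id ℝ) a f = f.eval a :=
    fun a f => rfl
  rw [e1, e1] at h
  rw [← h, mul_assoc, ← mul_pow, inv_mul_cancel₀ hx, one_pow, mul_one]

lemma aux_rank_upper (n k : ℕ) (hk2 : 2 ≤ k) (hkn : k ≤ n) (β : ℕ → ℕ → ℝ)
    (hyx : (momentMat n β).mulVec
      (coeffVec n (MvPolynomial.X 1 * MvPolynomial.X 0 - 1)) = 0)
    (p q : Polynomial ℝ) (hp : p.natDegree ≤ k - 1) (hq : q.natDegree ≤ k - 1)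
    (hrel : (momentMat n β).mulVec
      (coeffVec n (MvPolynomial.X 0 ^ k
        - Polynomial.aeval (MvPolynomial.X 0) p
        - Polynomial.aeval (MvPolynomial.X 1) q)) = 0)
    (hvar : ((momentMat n β).rank : Cardinal) ≤
      Cardinal.mk (varietyOf n (momentMat n β))) :
    (momentMat n β).rank ≤ 2 * k - 1 := by
  classical
  set N := k - 1 with hN
  set r : Polynomial ℝ :=
    Polynomial.X ^ (2 * k - 1) - (Polynomial.X ^ N * p + q.reflect N) with hr
  have hrefl_deg : (q.reflect N).natDegree ≤ N := by
    refine Polynomial.natDegree_le_iff_coeff_eq_zero.mpr fun i hi => ?_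
    rw [Polynomial.coeff_reflect, Polynomial.revAt_eq_self_of_lt hi]
    exact Polynomial.coeff_eq_zero_of_natDegree_lt (lt_of_le_of_lt hq hi)
  have hXp_deg : (Polynomial.X ^ N * p : Polynomial ℝ).natDegree ≤ 2 * k - 2 := by
    refine (Polynomial.natDegree_mul_le).trans ?_
    rw [Polynomial.natDegree_X_pow]
    omega
  have hrcoeff : r.coeff (2 * k - 1) = 1 := by
    rw [hr]
    rw [Polynomial.coeff_sub, Polynomial.coeff_add, Polynomial.coeff_X_pow]
    rw [Polynomial.coeff_eq_zero_of_natDegree_lt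
        (by omega : (Polynomial.X ^ N * p : Polynomial ℝ).natDegree < 2 * k - 1),
      Polynomial.coeff_eq_zero_of_natDegree_lt
        (by omega : (q.reflect N).natDegree < 2 * k - 1)]
    simp
  have hr0 : r ≠ 0 := by
    intro h; rw [h] at hrcoeff; simp at hrcoeff
  have hrdeg : r.natDegree ≤ 2 * k - 1 := by
    refine (Polynomial.natDegree_sub_le _ _).trans ?_
    simp only [Polynomial.natDegree_X_pow, max_le_iff]
    refine ⟨le_rfl, (Polynomial.natDegree_add_le _ _).trans ?_⟩
    omega
  have hkey : ∀ w ∈ varietyOf n (momentMat n β),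
      w.1 ≠ 0 ∧ w.2 = w.1⁻¹ ∧ r.IsRoot w.1 := by
    rintro ⟨x, y⟩ hw
    have h1 : MvPolynomial.eval ![x, y] (MvPolynomial.X 1 * MvPolynomial.X 0 - 1) = 0 := by
      refine hw _ ?_ hyx
      refine (MvPolynomial.totalDegree_sub _ _).trans ?_
      refine max_le ((MvPolynomial.totalDegree_mul _ _).trans ?_) (by simp)
      simp [MvPolynomial.totalDegree_X]; omega
    have h2 : MvPolynomial.eval ![x, y] (MvPolynomial.X 0 ^ k
        - Polynomial.aeval (MvPolynomial.X 0) p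
        - Polynomial.aeval (MvPolynomial.X 1) q) = 0 := by
      refine hw _ ?_ hrel
      refine (MvPolynomial.totalDegree_sub _ _).trans
        (max_le ((MvPolynomial.totalDegree_sub _ _).trans (max_le ?_ ?_)) ?_)
      · refine (MvPolynomial.totalDegree_pow _ _).trans ?_
        simp [MvPolynomial.totalDegree_X]; omega
      · exact (aux_td_aeval 0 p).trans (by omega)
      · exact (aux_td_aeval 1 q).trans (by omega)
    simp only [map_sub, _root_.map_mul, map_pow, MvPolynomial.eval_X, _root_.map_one,
      Matrix.cons_val_zero, Matrix.cons_val_one, Matrix.head_cons] at h1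
    rw [map_sub, map_sub, map_pow, MvPolynomial.eval_X, aux_eval_aeval, aux_eval_aeval] at h2
    simp only [Matrix.cons_val_zero, Matrix.cons_val_one, Matrix.head_cons] at h2
    have hyx1 : y * x = 1 := by linarith
    have hx0 : x ≠ 0 := right_ne_zero_of_mul_eq_one hyx1
    have hyi : y = x⁻¹ := eq_inv_of_mul_eq_one_left hyx1
    refine ⟨hx0, hyi, ?_⟩
    have hqe : q.eval x⁻¹ = x ^ k - p.eval x := by rw [← hyi]; linarith
    show r.eval x = 0
    rw [hr]
    simp only [Polynomial.eval_sub, Polynomial.eval_add, Polynomial.eval_mul,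
      Polynomial.eval_pow, Polynomial.eval_X]
    rw [aux_reflect_eval N q hq x hx0, hqe]
    have hpow : x ^ (2 * k - 1) = x ^ N * x ^ k := by
      rw [← pow_add]; congr 1; omega
    rw [hpow]; ring
  let S : Finset ℝ := r.roots.toFinset
  have hmap : ∀ w : varietyOf n (momentMat n β), (w : ℝ × ℝ).1 ∈ S := by
    rintro ⟨w, hw⟩
    obtain ⟨hx0, -, hroot⟩ := hkey w hw
    simp only [S, Multiset.mem_toFinset, Polynomial.mem_roots hr0]
    exact hroot
  have hinj : Function.Injective
      (fun w : varietyOf n (momentMat n β) => (⟨(w : ℝ × ℝ).1, hmap w⟩ : S)) := by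
    rintro ⟨⟨x, y⟩, hw⟩ ⟨⟨x', y'⟩, hw'⟩ h
    simp only [Subtype.mk.injEq] at h
    obtain ⟨-, hy, -⟩ := hkey _ hw
    obtain ⟨-, hy', -⟩ := hkey _ hw'
    apply Subtype.ext
    simp only at h hy hy' ⊢
    rw [Prod.mk.injEq]
    exact ⟨h, by rw [hy, hy', h]⟩
  have hcard : Cardinal.mk (varietyOf n (momentMat n β)) ≤ ((2 * k - 1 : ℕ) : Cardinal) := by
    calc Cardinal.mk (varietyOf n (momentMat n β)) ≤ Cardinal.mk S :=
          Cardinal.mk_le_of_injective hinj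
      _ = (S.card : Cardinal) := Cardinal.mk_coe_finset
      _ ≤ ((2 * k - 1 : ℕ) : Cardinal) := by
          refine Nat.cast_le.mpr ?_
          calc S.card ≤ Multiset.card r.roots := r.roots.toFinset_card_le
            _ ≤ r.natDegree := Polynomial.card_roots' r
            _ ≤ 2 * k - 1 := hrdeg
  exact_mod_cast hvar.trans hcard

lemma aux_rank_lower (n k : ℕ) (hk2 : 2 ≤ k) (hkn : k ≤ n) (β : ℕ → ℕ → ℝ)
    (hind : LinearIndependent ℝ
      (fun v : {v : MIdx n // ((v.1.1 : ℕ) = 0 ∧ (v.1.2 : ℕ) ≤ k - 1) ∨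
          ((v.1.2 : ℕ) = 0 ∧ (v.1.1 : ℕ) ≤ k - 1)} =>
        (fun r : MIdx n => momentMat n β r v.1))) :
    2 * k - 1 ≤ (momentMat n β).rank := by
  classical
  let e : Fin (2 * k - 1) → {v : MIdx n // ((v.1.1 : ℕ) = 0 ∧ (v.1.2 : ℕ) ≤ k - 1) ∨
      ((v.1.2 : ℕ) = 0 ∧ (v.1.1 : ℕ) ≤ k - 1)} := fun m =>
    if h : (m : ℕ) ≤ k - 1 then
      ⟨⟨(⟨0, by omega⟩, ⟨(m : ℕ), by omega⟩), by
        show 0 + (m : ℕ) ≤ n; omega⟩, Or.inl ⟨rfl, h⟩⟩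
    else
      ⟨⟨(⟨(m : ℕ) - (k - 1), by have := m.isLt; omega⟩, ⟨0, by omega⟩), by
        show (m : ℕ) - (k - 1) + 0 ≤ n; have := m.isLt; omega⟩,
        Or.inr ⟨rfl, by show (m : ℕ) - (k - 1) ≤ k - 1; have := m.isLt; omega⟩⟩
  have einj : Function.Injective e := by
    intro a b hab
    have ha := a.isLt; have hb := b.isLt
    by_cases h1 : (a : ℕ) ≤ k - 1 <;> by_cases h2 : (b : ℕ) ≤ k - 1 <;>
      simp only [e, dif_pos, dif_neg, h1, h2, dite_true, dite_false,
        Subtype.mk.injEq, Prod.mk.injEq, Fin.mk.injEq] at hab <;>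
      exact Fin.ext (by omega)
  have hind2 := hind.comp e einj
  have hmem : ∀ v : MIdx n, (fun r => momentMat n β r v) ∈
      LinearMap.range (momentMat n β).mulVecLin := fun v =>
    ⟨Pi.single v 1, by ext r; simp [Matrix.mulVecLin_apply, Matrix.mulVec_single]⟩
  let g : Fin (2 * k - 1) → LinearMap.range (momentMat n β).mulVecLin :=
    fun m => ⟨fun r => momentMat n β r (e m).1, hmem _⟩
  have hg : LinearIndependent ℝ g := by
    apply LinearIndependent.of_comp (LinearMap.range (momentMat n β).mulVecLin).subtype
    exact hind2
  have h := hg.fintype_card_le_finrank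
  rw [Matrix.rank]
  simpa using h

end AuxFlat

/-- Case I of the nondegenerate hyperbolic truncated moment problem: if `M(n)` is
positive semidefinite, recursively generated, satisfies `YX = 1`, the columns
`{1, X, Y, …, X^{k−1}, Y^{k−1}}` are linearly independent, there is a column
relation `X^k = p_{k−1}(X) + q_{k−1}(Y)` with `deg p_{k−1}, deg q_{k−1} ≤ k−1`
(2 ≤ k ≤ n), and `rank M(n) ≤ card V(M(n))`, then `M(n)` is flat:
`rank M(n) = 2k − 1`. -/
theorem flat_of_first_relation_at_xk (n k : ℕ) (hk2 : 2 ≤ k) (hkn : k ≤ n)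
    (β : ℕ → ℕ → ℝ)
    (hpsd : (momentMat n β).PosSemidef)
    (hrg : RecursivelyGenerated n (momentMat n β))
    (hyx : (momentMat n β).mulVec
      (coeffVec n (MvPolynomial.X 1 * MvPolynomial.X 0 - 1)) = 0)
    (hind : LinearIndependent ℝ
      (fun v : {v : MIdx n // ((v.1.1 : ℕ) = 0 ∧ (v.1.2 : ℕ) ≤ k - 1) ∨
          ((v.1.2 : ℕ) = 0 ∧ (v.1.1 : ℕ) ≤ k - 1)} =>
        (fun r : MIdx n => momentMat n β r v.1)))
    (p q : Polynomial ℝ) (hp : p.natDegree ≤ k - 1) (hq : q.natDegree ≤ k - 1)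
    (hrel : (momentMat n β).mulVec
      (coeffVec n (MvPolynomial.X 0 ^ k
        - Polynomial.aeval (MvPolynomial.X 0) p
        - Polynomial.aeval (MvPolynomial.X 1) q)) = 0)
    (hvar : ((momentMat n β).rank : Cardinal) ≤
      Cardinal.mk (varietyOf n (momentMat n β))) :
    (momentMat n β).rank = 2 * k - 1 := by
  have hub := aux_rank_upper n k hk2 hkn β hyx p q hp hq hrel hvar
  have hlb := aux_rank_lower n k hk2 hkn β hind
  omega
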